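/- Concentration implies approximation transfer for densest subgraph: let G be a complete graph on n vertices with nonnegative weights, α, ε > 0, and let Y_{u,v} be nonnegative numbers (one per edge) such that for every nonempty S ⊆ V, |Y_S − α·w(S)| ≤ ε·α·opt_D·|S|, where Y_S = Σ_{u,v∈S} Y_{u,v}, w(S) = Σ_{u,v∈S} w(u,v), and opt_D is the maximum density of G. If S maximizes Y_S/|S| up to factor φ (i.e., Y_S/|S| ≥ φ·max_{S''} Y_{S''}/|S''|), then w(S)/|S| ≥ (φ − 2ε)·opt_D. -/

import Mathlib

set_option maxHeartbeats 1000000 in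
/-- approximation transfer for densest subgraph. If for every nonempty
`S ⊆ V` the sample value `Y_S` is within `ε·α·optD·|S|` of `α·w(S)`, and `S` is a
`φ`-approximate densest subgraph with respect to `Y`, then `S` is a `(φ − 2ε)`-approximate
densest subgraph with respect to `w`. Here `w(S)` and `Y(S)` are half the sums over
ordered pairs inside `S`, and `optD` is the maximum `w`-density. -/
theorem densest_subgraph_transfer {V : Type*} [Fintype V] [DecidableEq V]
    (w Y : V → V → ℝ)
    (hw_nonneg : ∀ a b, 0 ≤ w a b) (hY_nonneg : ∀ a b, 0 ≤ Y a b)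
    (hn : 2 ≤ Fintype.card V)
    (α ε φ : ℝ) (hα : 0 < α) (hε : 0 < ε) (hφ0 : 0 < φ) (hφ1 : φ ≤ 1)
    (wS YS : Finset V → ℝ)
    (hwS : ∀ S, wS S = (1 / 2) * ∑ a ∈ S, ∑ b ∈ S.erase a, w a b)
    (hYS : ∀ S, YS S = (1 / 2) * ∑ a ∈ S, ∑ b ∈ S.erase a, Y a b)
    (hP : ((Finset.univ : Finset V).powerset.filter fun S => S.Nonempty).Nonempty)
    (optD : ℝ)
    (hoptD : optD = (((Finset.univ : Finset V).powerset.filter fun S => S.Nonempty).sup'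
      hP fun S => wS S / S.card))
    (hconc : ∀ S : Finset V, S.Nonempty → |YS S - α * wS S| ≤ ε * α * optD * S.card)
    (S : Finset V) (hSne : S.Nonempty)
    (happrox : YS S / S.card ≥
      φ * (((Finset.univ : Finset V).powerset.filter fun S'' => S''.Nonempty).sup'
        hP fun S'' => YS S'' / S''.card)) :
    wS S / S.card ≥ (φ - 2 * ε) * optD := by
  have hScard : (0:ℝ) < S.card := by exact_mod_cast hSne.card_pos
  have hSmem : S ∈ (Finset.univ : Finset V).powerset.filter fun S => S.Nonempty := by
    simp [Finset.mem_filter, hSne]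
  -- optD ≥ wS S / |S| for any nonempty S, and optD ≥ 0
  have hwS_nonneg : ∀ T : Finset V, 0 ≤ wS T := by
    intro T
    rw [hwS]
    have : (0:ℝ) ≤ ∑ a ∈ T, ∑ b ∈ T.erase a, w a b :=
      Finset.sum_nonneg fun a _ => Finset.sum_nonneg fun b _ => hw_nonneg a b
    linarith
  have hoptD0 : 0 ≤ optD := by
    rw [hoptD]
    refine le_trans ?_ (Finset.le_sup' _ hSmem)
    exact div_nonneg (hwS_nonneg S) hScard.le
  -- pick S* achieving optD
  obtain ⟨T, hTmem, hT⟩ := Finset.exists_mem_eq_sup'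
    hP (fun S => wS S / (S.card : ℝ))
  have hTne : T.Nonempty := (Finset.mem_filter.mp hTmem).2
  have hTcard : (0:ℝ) < T.card := by exact_mod_cast hTne.card_pos
  have hTopt : wS T / T.card = optD := by rw [hoptD, hT]
  -- Y-density of T is large
  have hconcT := abs_le.mp (hconc T hTne)
  have hYT : YS T / T.card ≥ α * optD - ε * α * optD := by
    rw [ge_iff_le, le_div_iff₀ hTcard]
    have : α * optD * T.card = α * wS T := by
      rw [← hTopt]; field_simp
    nlinarith [hconcT.1]
  -- sup of Y-densities ≥ YS T / |T|
  have hsup : YS T / T.card ≤ (((Finset.univ : Finset V).powerset.filter fun S'' => S''.Nonempty).sup'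
      hP fun S'' => YS S'' / S''.card) :=
    Finset.le_sup' (fun S'' => YS S'' / (S''.card : ℝ)) hTmem
  have hYS_lb : YS S / S.card ≥ φ * (α * optD - ε * α * optD) := by
    calc YS S / S.card ≥ φ * _ := happrox
    _ ≥ φ * (YS T / T.card) := by nlinarith
    _ ≥ φ * (α * optD - ε * α * optD) := by nlinarith
  have hconcS := abs_le.mp (hconc S hSne)
  have : α * (wS S / S.card) ≥ YS S / S.card - ε * α * optD := by
    have hkey : α * (wS S / S.card) * S.card = α * wS S := by field_simp
    rw [ge_iff_le, sub_le_iff_le_add, div_le_iff₀ hScard]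
    nlinarith [hconcS.2]
  have hfin : α * (wS S / S.card) ≥ α * ((φ - 2 * ε) * optD) := by nlinarith
  exact le_of_mul_le_mul_left hfin hα
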